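/- Let q be a power of a prime p and let F be an algebraically closed field of characteristic p containing 𝔽_q, complete with respect to a nonarchimedean absolute value |·|. Then for every sequence b : ℕ → F with |bₙ| → 0 as n → ∞, there exists a sequence c : ℕ → F with |cₙ| → 0 as n → ∞ such that cₙ − cₙ^q = bₙ for every n. Equivalently, the map 1 − σ is surjective on the Tate algebra F⟨t⟩, where σ(∑ aₙtⁿ) = ∑ aₙ^q tⁿ. -/

import Mathlib

open Filter Polynomial

lemma key_small (p n q : ℕ) [Fact p.Prime] (hn : n ≠ 0) (hq : q = p ^ n)
    (F : Type) [NormedField F] [IsUltrametricDist F] [CompleteSpace F] [CharP F p]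
    (x : F) (hx : ‖x‖ < 1) : ∃ c : F, ‖c‖ ≤ ‖x‖ ∧ c - c ^ q = x := by
  have hx0 : (0:ℝ) ≤ ‖x‖ := norm_nonneg x
  have h2 : 2 ≤ q := by
    rw [hq]
    calc 2 ≤ p := (Fact.out : p.Prime).two_le
    _ = p ^ 1 := (pow_one p).symm
    _ ≤ p ^ n := Nat.pow_le_pow_right (Fact.out : p.Prime).pos (by omega)
  have hiq : ∀ i : ℕ, i ≤ q ^ i := fun i =>
    (Nat.lt_pow_self (by omega : 1 < q) : i < q ^ i).le
  have hsumm : Summable (fun i : ℕ => x ^ q ^ i) := by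
    apply Summable.of_norm_bounded (summable_geometric_of_lt_one hx0 hx)
    intro i
    rw [norm_pow]
    exact pow_le_pow_of_le_one hx0 hx.le (hiq i)
  set c : F := ∑' i, x ^ q ^ i with hc
  have hsum : HasSum (fun i : ℕ => x ^ q ^ i) c := hsumm.hasSum
  -- Frobenius iterate is a continuous ring hom
  have hcont : Continuous (⇑(iterateFrobenius F p n)) := by
    have : ⇑(iterateFrobenius F p n) = fun y : F => y ^ p ^ n := by
      funext y; exact iterateFrobenius_def p n y
    rw [this]
    exact continuous_pow _
  have hsumq : HasSum (fun i : ℕ => x ^ q ^ (i + 1)) (c ^ q) := by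
    have := hsum.map (iterateFrobenius F p n) hcont
    have heq : (⇑(iterateFrobenius F p n) ∘ fun i : ℕ => x ^ q ^ i)
        = fun i : ℕ => x ^ q ^ (i + 1) := by
      funext i
      simp only [Function.comp_apply, iterateFrobenius_def, ← hq, ← pow_mul, pow_succ]
    have hcq : (iterateFrobenius F p n) c = c ^ q := by
      rw [iterateFrobenius_def, hq]
    rwa [heq, hcq] at this
  have hshift : HasSum (fun i : ℕ => x ^ q ^ i) (c ^ q + x) := by
    have := (hasSum_nat_add_iff (f := fun i : ℕ => x ^ q ^ i) 1).mp hsumq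
    simpa using this
  have hkey : c = c ^ q + x := hsum.unique hshift
  refine ⟨c, ?_, by linear_combination hkey⟩
  apply IsUltrametricDist.norm_tsum_le_of_forall_le_of_nonneg hx0
  intro i
  rw [norm_pow]
  calc ‖x‖ ^ q ^ i ≤ ‖x‖ ^ 1 :=
    pow_le_pow_of_le_one hx0 hx.le (Nat.one_le_pow _ _ (by omega))
  _ = ‖x‖ := pow_one _

lemma key_all (p n q : ℕ) [Fact p.Prime] (hn : n ≠ 0) (hq : q = p ^ n)
    (F : Type) [NormedField F] [IsUltrametricDist F] [CompleteSpace F]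
    [IsAlgClosed F] [CharP F p] (x : F) :
    ∃ c : F, c - c ^ q = x ∧ (‖x‖ < 1 → ‖c‖ ≤ ‖x‖) := by
  by_cases hx : ‖x‖ < 1
  · obtain ⟨c, h1, h2⟩ := key_small p n q hn hq F x hx
    exact ⟨c, h2, fun _ => h1⟩
  · have h2 : 2 ≤ q := by
      rw [hq]
      calc 2 ≤ p := (Fact.out : p.Prime).two_le
      _ = p ^ 1 := (pow_one p).symm
      _ ≤ p ^ n := Nat.pow_le_pow_right (Fact.out : p.Prime).pos (by omega)
    have P : F[X] := X ^ q - X + C x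
    have hdeg : (X ^ q - X + C x : F[X]).degree ≠ 0 := by
      have h1 : ((-X + C x : F[X])).degree < (X ^ q : F[X]).degree := by
        rw [degree_X_pow]
        calc ((-X + C x : F[X])).degree ≤ max (-X : F[X]).degree (C x).degree :=
          degree_add_le _ _
        _ ≤ max 1 0 := by
          apply max_le_max
          · rw [degree_neg, degree_X]
          · exact degree_C_le
        _ < (q : ℕ) := by
          simp only [max_eq_left (by norm_num : (0:WithBot ℕ) ≤ 1)]
          exact_mod_cast by omega
      have : (X ^ q - X + C x : F[X]).degree = q := by
        have : (X ^ q - X + C x : F[X]) = X ^ q + (-X + C x) := by ring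
        rw [this, degree_add_eq_left_of_degree_lt h1, degree_X_pow]
      rw [this]
      exact_mod_cast by omega
    obtain ⟨r, hr⟩ := IsAlgClosed.exists_root (X ^ q - X + C x : F[X]) hdeg
    refine ⟨r, ?_, fun h => absurd h hx⟩
    have := hr
    simp only [IsRoot, eval_add, eval_sub, eval_pow, eval_X, eval_C] at this
    linear_combination -this

theorem statement3
    (p n q : ℕ) [Fact p.Prime] (hn : n ≠ 0) (hq : q = p ^ n)
    (F : Type) [NormedField F] [IsUltrametricDist F] [CompleteSpace F]
    [IsAlgClosed F] [CharP F p]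
    (φ : GaloisField p n →+* F)
    (b : ℕ → F) (hb : Filter.Tendsto (fun k => ‖b k‖) Filter.atTop (nhds 0)) :
    ∃ c : ℕ → F, Filter.Tendsto (fun k => ‖c k‖) Filter.atTop (nhds 0) ∧
      ∀ k : ℕ, c k - (c k) ^ q = b k := by
  have H : ∀ k : ℕ, ∃ c : F, c - c ^ q = b k ∧ (‖b k‖ < 1 → ‖c‖ ≤ ‖b k‖) :=
    fun k => key_all p n q hn hq F (b k)
  choose c hc1 hc2 using H
  refine ⟨c, ?_, hc1⟩
  have hev : ∀ᶠ k in atTop, ‖b k‖ < 1 := hb.eventually_lt_const one_pos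
  apply squeeze_zero' (hev.mono fun k _ => norm_nonneg _) (hev.mono fun k h => hc2 k h) hb
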